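/- Let α, β ∈ MvPolynomial (Fin n) ℤ be nonzero primitive polynomials such that for every a : Fin n → AlgebraicClosure ℚ, α vanishes at a if and only if β vanishes at a. Then there exist m : ℕ, primitive irreducible polynomials γ₁, …, γ_m ∈ MvPolynomial (Fin n) ℤ, positive natural numbers a₁, …, a_m and b₁, …, b_m, and signs u, v ∈ {1, −1}, such that α = u · γ₁^{a₁} ⋯ γ_m^{a_m} and β = v · γ₁^{b₁} ⋯ γ_m^{b_m} in MvPolynomial (Fin n) ℤ. -/

import Mathlib

/-- An integer multivariate polynomial is primitive if every integer dividing all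
of its coefficients is a unit. -/
def IsPrimitiveInt {n : ℕ} (α : MvPolynomial (Fin n) ℤ) : Prop :=
  ∀ c : ℤ, (∀ d : Fin n →₀ ℕ, c ∣ α.coeff d) → IsUnit c

open MvPolynomial in
private lemma exists_pi (K : Type*) [Field K] [Algebra ℚ K] :
    ∃ π : K →ₗ[ℚ] ℚ, π 1 = 1 := by
  obtain ⟨c, hc⟩ := Submodule.exists_isCompl (ℚ ∙ (1 : K))
  set e := LinearEquiv.toSpanNonzeroSingleton ℚ K 1 one_ne_zero with he
  refine ⟨(e.symm : (ℚ ∙ (1:K)) →ₗ[ℚ] ℚ).comp (Submodule.projectionOnto _ c hc), ?_⟩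
  have h1 : (1 : K) ∈ ℚ ∙ (1 : K) := Submodule.mem_span_singleton_self 1
  have hproj : Submodule.projectionOnto _ c hc (1 : K) = ⟨1, h1⟩ := by
    have := Submodule.linearProjOfIsCompl_apply_left hc (⟨1, h1⟩ : ℚ ∙ (1 : K))
    simpa using this
  have he1 : e 1 = ⟨1, h1⟩ := by
    ext
    simp [he, LinearEquiv.toSpanNonzeroSingleton]
  simp only [LinearMap.comp_apply, hproj, LinearEquiv.coe_coe, ← he1,
    LinearEquiv.symm_apply_apply]

open MvPolynomial in
private lemma map_dvd_map_down {n : ℕ} {K : Type*} [Field K] [Algebra ℚ K]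
    {a b : MvPolynomial (Fin n) ℚ}
    (h : MvPolynomial.map (algebraMap ℚ K) a ∣ MvPolynomial.map (algebraMap ℚ K) b) :
    a ∣ b := by
  classical
  obtain ⟨π, hπ⟩ := exists_pi K
  obtain ⟨q, hq⟩ := h
  set T : MvPolynomial (Fin n) K → MvPolynomial (Fin n) ℚ := fun x =>
    ∑ d ∈ x.support, MvPolynomial.monomial d (π (x.coeff d)) with hT
  have coeffT : ∀ (x : MvPolynomial (Fin n) K) d, (T x).coeff d = π (x.coeff d) := by
    intro x d
    rw [hT]
    simp only [MvPolynomial.coeff_sum, MvPolynomial.coeff_monomial]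
    rw [Finset.sum_ite_eq' x.support d fun d => π (x.coeff d)]
    by_cases hd : d ∈ x.support
    · simp [hd]
    · simp only [hd, if_false]
      rw [MvPolynomial.notMem_support_iff.mp hd, map_zero]

  refine ⟨T q, ?_⟩
  apply MvPolynomial.ext
  intro d
  have h1 : b.coeff d = π ((MvPolynomial.map (algebraMap ℚ K) b).coeff d) := by
    rw [MvPolynomial.coeff_map, Algebra.algebraMap_eq_smul_one, map_smul, hπ, smul_eq_mul, mul_one]
  rw [h1, hq, MvPolynomial.coeff_mul, map_sum, MvPolynomial.coeff_mul]
  refine Finset.sum_congr rfl fun x _ => ?_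
  rw [MvPolynomial.coeff_map, ← Algebra.smul_def, map_smul, smul_eq_mul, coeffT]

open MvPolynomial in
private lemma int_dvd_of_rat_dvd {n : ℕ} {p g : MvPolynomial (Fin n) ℤ}
    (hp : Prime p) (hprim : IsPrimitiveInt p)
    (hdvd : MvPolynomial.map (Int.castRingHom ℚ) p ∣ MvPolynomial.map (Int.castRingHom ℚ) g) :
    p ∣ g := by
  classical
  letI := MvPolynomial.algebraMvPolynomial (σ := Fin n) (R := ℤ) (S := ℚ)
  have halg : (algebraMap (MvPolynomial (Fin n) ℤ) (MvPolynomial (Fin n) ℚ)) =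
      MvPolynomial.map (Int.castRingHom ℚ) := by
    have h0 : (algebraMap ℤ ℚ) = Int.castRingHom ℚ := Subsingleton.elim _ _
    rw [MvPolynomial.algebraMap_def, h0]
  obtain ⟨q, hq⟩ := hdvd
  obtain ⟨⟨q', s⟩, hs⟩ :=
    IsLocalization.surj (M := (nonZeroDivisors ℤ).map (MvPolynomial.C (σ := Fin n))) q
  obtain ⟨N, hN, hCN⟩ := s.2
  have hinj : Function.Injective (MvPolynomial.map (Int.castRingHom ℚ) :
      MvPolynomial (Fin n) ℤ → MvPolynomial (Fin n) ℚ) :=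
    MvPolynomial.map_injective _ Int.cast_injective
  have heq : p * q' = g * MvPolynomial.C N := by
    apply hinj
    rw [map_mul, map_mul, ← halg, ← hs, halg, hq, ← hCN]
    ring
  have hdvd2 : p ∣ g * MvPolynomial.C N := ⟨q', heq.symm⟩
  rcases hp.2.2 _ _ hdvd2 with hg | hCNdvd
  · exact hg
  · exfalso
    have hN0 : N ≠ 0 := nonZeroDivisors.ne_zero hN
    obtain ⟨u, hu⟩ := UniqueFactorizationMonoid.factors_prod hN0
    have h1 : (MvPolynomial.C (σ := Fin n) N : MvPolynomial (Fin n) ℤ) =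
        ((UniqueFactorizationMonoid.factors N).map MvPolynomial.C).prod *
          MvPolynomial.C (u : ℤ) := by
      rw [← map_multiset_prod, ← map_mul, hu]
    rw [h1] at hCNdvd
    have hu2 : IsUnit (MvPolynomial.C (σ := Fin n) (u : ℤ)) := u.isUnit.map _
    rcases hp.2.2 _ _ hCNdvd with h2 | h2
    · obtain ⟨x, hx, hpx⟩ := hp.exists_mem_multiset_dvd h2
      obtain ⟨ℓ, hℓ, rfl⟩ := Multiset.mem_map.mp hx
      have hℓp : Prime ℓ := UniqueFactorizationMonoid.prime_of_factor ℓ hℓ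
      have hCℓp : Prime (MvPolynomial.C (σ := Fin n) ℓ) := (MvPolynomial.prime_C_iff (Fin n)).mpr hℓp
      have hassoc := hp.associated_of_dvd hCℓp hpx
      obtain ⟨r, hr⟩ := hassoc.symm.dvd
      refine hℓp.not_unit (hprim ℓ fun d => ?_)
      rw [hr, MvPolynomial.coeff_C_mul]
      exact Dvd.intro _ rfl
    · exact hp.not_unit (isUnit_of_dvd_unit h2 hu2)

private lemma key_dvd {n : ℕ} {α β p : MvPolynomial (Fin n) ℤ}
    (h : ∀ a : Fin n → AlgebraicClosure ℚ,
      MvPolynomial.eval₂ (Int.castRingHom (AlgebraicClosure ℚ)) a α = 0 →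
        MvPolynomial.eval₂ (Int.castRingHom (AlgebraicClosure ℚ)) a β = 0)
    (hp : Prime p) (hprim : IsPrimitiveInt p) (hpα : p ∣ α) : p ∣ β := by
  set K := AlgebraicClosure ℚ
  set φ := Int.castRingHom K with hφdef
  have hmem : MvPolynomial.map φ β ∈
      MvPolynomial.vanishingIdeal K (MvPolynomial.zeroLocus K (Ideal.span {MvPolynomial.map φ p})) := by
    rw [MvPolynomial.mem_vanishingIdeal_iff]
    intro x hx
    have hpx : MvPolynomial.eval x (MvPolynomial.map φ p) = 0 :=
      hx _ (Ideal.subset_span rfl)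
    obtain ⟨q, rfl⟩ := hpα
    have hαx : MvPolynomial.eval₂ φ x (p * q) = 0 := by
      rw [MvPolynomial.eval₂_eq_eval_map, map_mul, map_mul, hpx, zero_mul]
    have hb := h x hαx
    rwa [MvPolynomial.eval₂_eq_eval_map] at hb
  rw [MvPolynomial.vanishingIdeal_zeroLocus_eq_radical] at hmem
  obtain ⟨k, hk⟩ := hmem
  rw [Ideal.mem_span_singleton] at hk
  have hφ : φ = (algebraMap ℚ K).comp (Int.castRingHom ℚ) := Subsingleton.elim _ _
  have hk' : MvPolynomial.map (algebraMap ℚ K) (MvPolynomial.map (Int.castRingHom ℚ) p) ∣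
      MvPolynomial.map (algebraMap ℚ K) (MvPolynomial.map (Int.castRingHom ℚ) (β ^ k)) := by
    rw [MvPolynomial.map_map, MvPolynomial.map_map, ← hφ]
    rw [map_pow]
    exact hk
  have h2 : MvPolynomial.map (Int.castRingHom ℚ) p ∣
      MvPolynomial.map (Int.castRingHom ℚ) (β ^ k) := map_dvd_map_down hk'
  exact hp.dvd_of_dvd_pow (int_dvd_of_rat_dvd hp hprim h2)

private lemma unit_eq_C {n : ℕ} {w : MvPolynomial (Fin n) ℤ} (hw : IsUnit w) :
    ∃ u : ℤˣ, w = MvPolynomial.C (u : ℤ) := by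
  induction n with
  | zero =>
    obtain ⟨r, rfl⟩ := MvPolynomial.C_surjective (Fin 0) w
    have hr : IsUnit r := by
      have h2 := hw.map (MvPolynomial.constantCoeff (σ := Fin 0) (R := ℤ))
      simpa using h2
    exact ⟨hr.unit, by simp⟩
  | succ m ih =>
    have hw' : IsUnit (MvPolynomial.finSuccEquiv ℤ m w) :=
      hw.map (MvPolynomial.finSuccEquiv ℤ m).toAlgHom.toRingHom
    obtain ⟨r, hr, hCr⟩ := Polynomial.isUnit_iff.mp hw'
    obtain ⟨u, rfl⟩ := ih hr
    refine ⟨u, ?_⟩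
    have h3 := congrArg (MvPolynomial.finSuccEquiv ℤ m).symm hCr
    rw [AlgEquiv.symm_apply_apply] at h3
    rw [← h3]
    have h4 := congrArg (fun f : ℤ →+* MvPolynomial (Fin (m+1)) ℤ => f (u : ℤ))
      (MvPolynomial.finSuccEquiv_comp_C_eq_C (R := ℤ) m)
    simpa using h4.symm

private lemma prim_of_dvd {n : ℕ} {α p : MvPolynomial (Fin n) ℤ}
    (hα : IsPrimitiveInt α) (h : p ∣ α) : IsPrimitiveInt p := by
  intro c hc
  obtain ⟨q, rfl⟩ := h
  refine hα c fun d => ?_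
  rw [MvPolynomial.coeff_mul]
  exact Finset.dvd_sum fun x _ => Dvd.dvd.mul_right (hc x.1) _

private noncomputable instance instNormMvPolyInt {n : ℕ} :
    NormalizationMonoid (MvPolynomial (Fin n) ℤ) :=
  UniqueFactorizationMonoid.normalizationMonoid.toNormalizationMonoid

private lemma mem_nf_trans {n : ℕ} {x y : MvPolynomial (Fin n) ℤ}
    (hx0 : x ≠ 0) (hy0 : y ≠ 0) (hxprim : IsPrimitiveInt x)
    (hxy : ∀ a : Fin n → AlgebraicClosure ℚ,
      MvPolynomial.eval₂ (Int.castRingHom (AlgebraicClosure ℚ)) a x = 0 →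
        MvPolynomial.eval₂ (Int.castRingHom (AlgebraicClosure ℚ)) a y = 0)
    {p : MvPolynomial (Fin n) ℤ}
    (hpx : p ∈ UniqueFactorizationMonoid.normalizedFactors x) :
    p ∈ UniqueFactorizationMonoid.normalizedFactors y := by
  have hp : Prime p := UniqueFactorizationMonoid.prime_of_normalized_factor p hpx
  have hpdvd : p ∣ x := UniqueFactorizationMonoid.dvd_of_mem_normalizedFactors hpx
  have hpprim : IsPrimitiveInt p := prim_of_dvd hxprim hpdvd
  have hpy : p ∣ y := key_dvd hxy hp hpprim hpdvd
  obtain ⟨q, hq, hpq⟩ :=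
    UniqueFactorizationMonoid.exists_mem_normalizedFactors_of_dvd hy0 hp.irreducible hpy
  have hpq2 : p = q := by
    have h1 := UniqueFactorizationMonoid.normalize_normalized_factor p hpx
    have h2 := UniqueFactorizationMonoid.normalize_normalized_factor q hq
    rw [← h1, ← h2]
    exact normalize_eq_normalize_iff.mpr (dvd_dvd_iff_associated.mpr hpq)
  rwa [hpq2]

/-- Nonzero primitive integer polynomials vanishing at exactly the same points of
the algebraic closure of `ℚ` have, up to sign, a common system of primitive
irreducible factors, with positive exponents. -/
theorem primitive_same_zeros_common_factorisation (n : ℕ)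
    (α β : MvPolynomial (Fin n) ℤ) (hα0 : α ≠ 0) (hβ0 : β ≠ 0)
    (hαprim : IsPrimitiveInt α) (hβprim : IsPrimitiveInt β)
    (h : ∀ a : Fin n → AlgebraicClosure ℚ,
      MvPolynomial.eval₂ (Int.castRingHom (AlgebraicClosure ℚ)) a α = 0 ↔
        MvPolynomial.eval₂ (Int.castRingHom (AlgebraicClosure ℚ)) a β = 0) :
    ∃ (m : ℕ) (γ : Fin m → MvPolynomial (Fin n) ℤ) (a b : Fin m → ℕ) (u v : ℤˣ),
      (∀ i, IsPrimitiveInt (γ i)) ∧ (∀ i, Irreducible (γ i)) ∧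
      (∀ i, 0 < a i) ∧ (∀ i, 0 < b i) ∧
      α = MvPolynomial.C (u : ℤ) * ∏ i, γ i ^ a i ∧
      β = MvPolynomial.C (v : ℤ) * ∏ i, γ i ^ b i := by
  classical
  have key : ∀ p : MvPolynomial (Fin n) ℤ, p ∈ (UniqueFactorizationMonoid.normalizedFactors α) ↔ p ∈ (UniqueFactorizationMonoid.normalizedFactors β) := fun p =>
    ⟨fun hp => mem_nf_trans hα0 hβ0 hαprim (fun a => (h a).mp) hp,
     fun hp => mem_nf_trans hβ0 hα0 hβprim (fun a => (h a).mpr) hp⟩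
  set s : Finset (MvPolynomial (Fin n) ℤ) := (UniqueFactorizationMonoid.normalizedFactors α).toFinset with hs
  have hsβ : (UniqueFactorizationMonoid.normalizedFactors β).toFinset = s := by
    ext p
    simp only [hs, Multiset.mem_toFinset]
    exact (key p).symm
  set e : ↥s ≃ Fin s.card := Fintype.equivFinOfCardEq (Fintype.card_coe s)
  refine ⟨s.card, fun i => ((e.symm i : ↥s) : MvPolynomial (Fin n) ℤ), fun i => (UniqueFactorizationMonoid.normalizedFactors α).count ((e.symm i : ↥s) : MvPolynomial (Fin n) ℤ),
    fun i => (UniqueFactorizationMonoid.normalizedFactors β).count ((e.symm i : ↥s) : MvPolynomial (Fin n) ℤ), ?_⟩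
  have hmemα : ∀ i : Fin s.card, ((e.symm i : ↥s) : MvPolynomial (Fin n) ℤ) ∈ (UniqueFactorizationMonoid.normalizedFactors α) := by
    intro i
    exact Multiset.mem_toFinset.mp (e.symm i).2
  have hmemβ : ∀ i : Fin s.card, ((e.symm i : ↥s) : MvPolynomial (Fin n) ℤ) ∈ (UniqueFactorizationMonoid.normalizedFactors β) := fun i => (key _).mp (hmemα i)
  -- the products
  have hprodα : ∏ i, ((e.symm i : ↥s) : MvPolynomial (Fin n) ℤ) ^ (UniqueFactorizationMonoid.normalizedFactors α).count ((e.symm i : ↥s) : MvPolynomial (Fin n) ℤ) = (UniqueFactorizationMonoid.normalizedFactors α).prod := by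
    rw [Finset.prod_multiset_count (UniqueFactorizationMonoid.normalizedFactors α)]
    rw [← hs]
    rw [← Finset.prod_coe_sort s (fun p => p ^ (UniqueFactorizationMonoid.normalizedFactors α).count p)]
    exact Equiv.prod_comp e.symm (fun x : ↥s => (x : MvPolynomial (Fin n) ℤ) ^ (UniqueFactorizationMonoid.normalizedFactors α).count (x : MvPolynomial (Fin n) ℤ))
  have hprodβ : ∏ i, ((e.symm i : ↥s) : MvPolynomial (Fin n) ℤ) ^ (UniqueFactorizationMonoid.normalizedFactors β).count ((e.symm i : ↥s) : MvPolynomial (Fin n) ℤ) = (UniqueFactorizationMonoid.normalizedFactors β).prod := by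
    rw [Finset.prod_multiset_count (UniqueFactorizationMonoid.normalizedFactors β), hsβ]
    rw [← Finset.prod_coe_sort s (fun p => p ^ (UniqueFactorizationMonoid.normalizedFactors β).count p)]
    exact Equiv.prod_comp e.symm (fun x : ↥s => (x : MvPolynomial (Fin n) ℤ) ^ (UniqueFactorizationMonoid.normalizedFactors β).count (x : MvPolynomial (Fin n) ℤ))
  obtain ⟨wα, hwα⟩ := UniqueFactorizationMonoid.prod_normalizedFactors hα0
  obtain ⟨wβ, hwβ⟩ := UniqueFactorizationMonoid.prod_normalizedFactors hβ0
  obtain ⟨u, hu⟩ := unit_eq_C wα.isUnit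
  obtain ⟨v, hv⟩ := unit_eq_C wβ.isUnit
  refine ⟨u, v, ?_, ?_, ?_, ?_, ?_, ?_⟩
  · intro i
    exact prim_of_dvd hαprim (UniqueFactorizationMonoid.dvd_of_mem_normalizedFactors (hmemα i))
  · intro i
    exact (UniqueFactorizationMonoid.prime_of_normalized_factor _ (hmemα i)).irreducible
  · intro i
    exact Multiset.count_pos.mpr (hmemα i)
  · intro i
    exact Multiset.count_pos.mpr (hmemβ i)
  · rw [hprodα, ← hu, mul_comm]
    exact hwα.symm
  · rw [hprodβ, ← hv, mul_comm]
    exact hwβ.symm
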